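/- Let K be a CRG all of whose vertices are white and all of whose edges are black or gray. Suppose a_0, a_1, a_2, b_0, b_1, b_2 are six distinct vertices of K such that a_0, a_1, a_2 are pairwise joined by gray edges and, for all distinct indices i, j ∈ {0,1,2}, the vertices b_i and a_j are joined by a gray edge. Then H9 embeds in K. -/

import Mathlib

/-- Colors for edges of a colored regularity graph. -/
inductive EColor : Type
  | white
  | gray
  | black
deriving DecidableEq

/-- A colored regularity graph (CRG) on a finite vertex type `V`: each vertex is
white or black (`vWhite v = true` means white), and each pair of distinct vertices
gets a symmetric edge color (white, gray or black). -/
structure CRG (V : Type) [Fintype V] where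
  vWhite : V → Bool
  ecolor : V → V → EColor
  ecolor_symm : ∀ u v, ecolor u v = ecolor v u

namespace CRG

variable {V : Type} [Fintype V] [DecidableEq V]

/-- The matrix `M_K(p)`. -/
noncomputable def M (K : CRG V) (p : ℝ) (u v : V) : ℝ :=
  if u = v then (if K.vWhite u then p else 1 - p)
  else
    match K.ecolor u v with
    | EColor.white => p
    | EColor.black => 1 - p
    | EColor.gray => 0

/-- The function `g_K(p)`: the minimum of `xᵀ M_K(p) x` over nonnegative weight
vectors summing to `1`. -/
noncomputable def g (K : CRG V) (p : ℝ) : ℝ :=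
  sInf {r : ℝ | ∃ x : V → ℝ, (∀ v, 0 ≤ x v) ∧ (∑ v, x v) = 1 ∧
    r = ∑ u, ∑ v, x u * K.M p u v * x v}

/-- The sub-CRG induced on a subset `s` of the vertices. -/
def sub (K : CRG V) (s : Finset V) : CRG {v // v ∈ s} where
  vWhite := fun v => K.vWhite v.1
  ecolor := fun u v => K.ecolor u.1 v.1
  ecolor_symm := fun u v => K.ecolor_symm u.1 v.1

/-- `K` is `p`-core if `g_K(p) < g_{K'}(p)` for every proper (nonempty) sub-CRG `K'`. -/
def IsPCore (K : CRG V) (p : ℝ) : Prop :=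
  ∀ s : Finset V, s.Nonempty → s ≠ Finset.univ → K.g p < (K.sub s).g p

/-- `x` is an optimal weight vector for `K` at `p`. -/
def IsOptWeight (K : CRG V) (p : ℝ) (x : V → ℝ) : Prop :=
  (∀ v, 0 ≤ x v) ∧ (∑ v, x v) = 1 ∧
    (∑ u, ∑ v, x u * K.M p u v * x v) = K.g p

/-- The gray degree `d_G(v)`: total weight of gray neighbors of `v`. -/
noncomputable def dG (K : CRG V) (x : V → ℝ) (v : V) : ℝ :=
  ∑ w ∈ Finset.univ.filter fun w => w ≠ v ∧ K.ecolor v w = EColor.gray, x w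

/-- The white degree `d_W(v)`: total weight of white neighbors of `v`, including `v`
itself if `v` is white. -/
noncomputable def dW (K : CRG V) (x : V → ℝ) (v : V) : ℝ :=
  (∑ w ∈ Finset.univ.filter fun w => w ≠ v ∧ K.ecolor v w = EColor.white, x w) +
    (if K.vWhite v then x v else 0)

/-- The black degree `d_B(v)`: total weight of black neighbors of `v`, including `v`
itself if `v` is black. -/
noncomputable def dB (K : CRG V) (x : V → ℝ) (v : V) : ℝ :=
  (∑ w ∈ Finset.univ.filter fun w => w ≠ v ∧ K.ecolor v w = EColor.black, x w) +
    (if K.vWhite v then 0 else x v)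

/-- The number of gray neighbors of `v`. -/
def grayDeg (K : CRG V) (v : V) : ℕ :=
  (Finset.univ.filter fun w => w ≠ v ∧ K.ecolor v w = EColor.gray).card

end CRG

/-- A graph `H` embeds in a CRG `K`, written `H ↦ K`. -/
def EmbedsIn {α : Type*} {V : Type} [Fintype V] (H : SimpleGraph α) (K : CRG V) : Prop :=
  ∃ φ : α → V,
    (∀ a b : α, H.Adj a b →
      (φ a = φ b ∧ K.vWhite (φ a) = false) ∨
      (φ a ≠ φ b ∧ (K.ecolor (φ a) (φ b) = EColor.black ∨ K.ecolor (φ a) (φ b) = EColor.gray))) ∧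
    (∀ a b : α, a ≠ b → ¬H.Adj a b →
      (φ a = φ b ∧ K.vWhite (φ a) = true) ∨
      (φ a ≠ φ b ∧ (K.ecolor (φ a) (φ b) = EColor.white ∨ K.ecolor (φ a) (φ b) = EColor.gray)))

/-- The graph `H₉`: vertices `ℤ₉`, distinct `i,j` adjacent iff `i - j ≡ ±1, ±2 (mod 9)`
or `{i,j} ⊆ {0,3,6}`. -/
def H9 : SimpleGraph (ZMod 9) :=
  SimpleGraph.fromRel (fun i j =>
    i - j = 1 ∨ i - j = 2 ∨ (i ∈ ({0, 3, 6} : Set (ZMod 9)) ∧ j ∈ ({0, 3, 6} : Set (ZMod 9))))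

/-- Explicit unfolding of adjacency in `H9`. -/
lemma h9_adj_iff (x y : ZMod 9) :
    H9.Adj x y ↔ x ≠ y ∧
      ((x - y = 1 ∨ x - y = 2 ∨ ((x = 0 ∨ x = 3 ∨ x = 6) ∧ (y = 0 ∨ y = 3 ∨ y = 6))) ∨
       (y - x = 1 ∨ y - x = 2 ∨ ((y = 0 ∨ y = 3 ∨ y = 6) ∧ (x = 0 ∨ x = 3 ∨ x = 6)))) := by
  rw [H9, SimpleGraph.fromRel_adj]
  simp only [Set.mem_insert_iff, Set.mem_singleton_iff]

instance h9_adj_dec : DecidableRel H9.Adj := fun x y =>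
  decidable_of_iff' _ (h9_adj_iff x y)

/-- The coloring map used to embed `H9`. -/
def cmap : Fin 9 → Fin 6 := ![3, 0, 1, 4, 2, 1, 5, 0, 2]

/-- Gray-pair predicate on indices: `0,1,2` stand for `a 0, a 1, a 2` and
`3,4,5` stand for `b 0, b 1, b 2`. -/
def grayP (u v : Fin 6) : Prop :=
  u ≠ v ∧ ((u.val < 3 ∧ v.val < 3) ∨
    (u.val < 3 ∧ 3 ≤ v.val ∧ u.val ≠ v.val - 3) ∨
    (v.val < 3 ∧ 3 ≤ u.val ∧ v.val ≠ u.val - 3))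

instance : ∀ u v : Fin 6, Decidable (grayP u v) := fun u v => by
  unfold grayP; infer_instance

lemma cmap_adj : ∀ x y : ZMod 9, H9.Adj x y → cmap x ≠ cmap y := by
  letI : ∀ x y : ZMod 9, Decidable (H9.Adj x y → cmap x ≠ cmap y) := fun x y => inferInstance
  decide

lemma cmap_nonadj : ∀ x y : ZMod 9, x ≠ y → ¬H9.Adj x y →
    cmap x = cmap y ∨ grayP (cmap x) (cmap y) := by
  letI : ∀ x y : ZMod 9, Decidable (x ≠ y → ¬H9.Adj x y →
    cmap x = cmap y ∨ grayP (cmap x) (cmap y)) := fun x y => inferInstance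
  decide

theorem H9_embeds_of_gray_triangle_config {V : Type} [Fintype V] [DecidableEq V]
    (K : CRG V)
    (hwhite : ∀ v : V, K.vWhite v = true)
    (hedges : ∀ u v : V, u ≠ v → K.ecolor u v ≠ EColor.white)
    (a b : Fin 3 → V)
    (hainj : Function.Injective a) (hbinj : Function.Injective b)
    (hab : ∀ i j : Fin 3, a i ≠ b j)
    (hagray : ∀ i j : Fin 3, i ≠ j → K.ecolor (a i) (a j) = EColor.gray)
    (hbagray : ∀ i j : Fin 3, i ≠ j → K.ecolor (b i) (a j) = EColor.gray) :
    EmbedsIn H9 K := by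
  -- the realization map `Fin 6 → V`
  set f : Fin 6 → V := fun i =>
    if h : i.val < 3 then a ⟨i.val, h⟩ else b ⟨i.val - 3, by omega⟩ with hf
  have hfa : ∀ (i : Fin 6) (h : i.val < 3), f i = a ⟨i.val, h⟩ := fun i h => dif_pos h
  have hfb : ∀ (i : Fin 6) (h : ¬ i.val < 3), f i = b ⟨i.val - 3, by omega⟩ :=
    fun i h => dif_neg h
  have habg : ∀ i j : Fin 3, i ≠ j → K.ecolor (a i) (b j) = EColor.gray := fun i j h =>
    (K.ecolor_symm (a i) (b j)).trans (hbagray j i (fun e => h e.symm))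
  have fne : ∀ u v : Fin 6, u ≠ v → f u ≠ f v := by
    intro u v huv
    have hvne : u.val ≠ v.val := fun e => huv (Fin.ext e)
    by_cases h1 : u.val < 3 <;> by_cases h2 : v.val < 3
    · rw [hfa u h1, hfa v h2]
      exact fun e => hvne (Fin.mk.inj (hainj e))
    · rw [hfa u h1, hfb v h2]; exact hab _ _
    · rw [hfb u h1, hfa v h2]; exact fun e => hab _ _ e.symm
    · rw [hfb u h1, hfb v h2]
      intro e
      have := Fin.mk.inj (hbinj e)
      omega
  have fgray : ∀ u v : Fin 6, grayP u v → K.ecolor (f u) (f v) = EColor.gray := by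
    rintro u v ⟨huv, hcase⟩
    have hvne : u.val ≠ v.val := fun e => huv (Fin.ext e)
    rcases hcase with ⟨h1, h2⟩ | ⟨h1, h2, h3⟩ | ⟨h1, h2, h3⟩
    · rw [hfa u h1, hfa v h2]
      exact hagray _ _ (fun e => hvne (Fin.mk.inj e))
    · rw [hfa u h1, hfb v (by omega)]
      exact habg _ _ (fun e => h3 (Fin.mk.inj e))
    · rw [hfb u (by omega), hfa v h1]
      exact hbagray _ _ (fun e => h3 (Fin.mk.inj e).symm)
  have key : ∀ u v : V, u ≠ v →
      (K.ecolor u v = EColor.black ∨ K.ecolor u v = EColor.gray) := by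
    intro u v h
    rcases hc : K.ecolor u v with _ | _ | _
    · exact absurd hc (hedges u v h)
    · exact Or.inr rfl
    · exact Or.inl rfl
  refine ⟨fun i => f (cmap i), ?_, ?_⟩
  · intro x y h
    have h1 : cmap x ≠ cmap y := cmap_adj x y h
    exact Or.inr ⟨fne _ _ h1, key _ _ (fne _ _ h1)⟩
  · intro x y hne hnadj
    rcases cmap_nonadj x y hne hnadj with he | hg
    · exact Or.inl ⟨congrArg f he, hwhite _⟩
    · exact Or.inr ⟨fne _ _ hg.1, Or.inr (fgray _ _ hg)⟩
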